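/- arXiv:2604.02505 — 2 statements merged into one kernel-verified Lean document; each statement's English description precedes it below -/
import Mathlib

section
/- The gradient of m ↦ η tr(√(mm^T + S)), for a fixed positive definite symmetric matrix S and η > 0, equals η (mm^T + S)^{-1/2} m; moreover this function is convex in m. -/
open Matrix
open scoped Classical

/-- The positive semidefinite square root of a matrix (zero if not PSD). -/
noncomputable def sqrtM {n : ℕ} (A : Matrix (Fin n) (Fin n) ℝ) : Matrix (Fin n) (Fin n) ℝ :=
  if h : A.PosSemidef then
    (h.1.eigenvectorUnitary : Matrix (Fin n) (Fin n) ℝ) *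
      diagonal (RCLike.ofReal ∘ Real.sqrt ∘ h.1.eigenvalues) *
      (star h.1.eigenvectorUnitary : Matrix (Fin n) (Fin n) ℝ)
  else 0

/-- Euclidean norm of a vector. -/
noncomputable def euclNorm {n : ℕ} (v : Fin n → ℝ) : ℝ := Real.sqrt (v ⬝ᵥ v)

/-- The ℓ₂ operator (spectral) norm of a matrix. -/
noncomputable def opNorm {n : ℕ} (A : Matrix (Fin n) (Fin n) ℝ) : ℝ :=
  ⨆ u : {u : Fin n → ℝ // euclNorm u ≤ 1}, euclNorm (A *ᵥ u)


namespace LeonAux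

variable {n : ℕ}

open scoped MatrixOrder in
lemma sqrtM_eq {A : Matrix (Fin n) (Fin n) ℝ} (h : A.PosSemidef) :
    sqrtM A = cfc Real.sqrt A := by
  rw [h.1.cfc_eq, Matrix.IsHermitian.cfc, sqrtM, dif_pos h, Unitary.conjStarAlgAut_apply]

open scoped MatrixOrder in
lemma sqrtM_posSemidef {A : Matrix (Fin n) (Fin n) ℝ} (h : A.PosSemidef) :
    (sqrtM A).PosSemidef := by
  rw [sqrtM_eq h]
  exact Matrix.nonneg_iff_posSemidef.mp (cfc_nonneg fun x _ => Real.sqrt_nonneg x)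

open scoped MatrixOrder in
lemma sqrtM_mul_self {A : Matrix (Fin n) (Fin n) ℝ} (h : A.PosSemidef) :
    sqrtM A * sqrtM A = A := by
  rw [sqrtM_eq h, ← cfc_mul Real.sqrt Real.sqrt A]
  conv_rhs => rw [← cfc_id ℝ A]
  refine cfc_congr fun x hx => ?_
  exact Real.mul_self_sqrt (spectrum_nonneg_of_nonneg (Matrix.nonneg_iff_posSemidef.mpr h) hx)

lemma sqrtM_transpose {A : Matrix (Fin n) (Fin n) ℝ} (h : A.PosSemidef) :
    (sqrtM A)ᵀ = sqrtM A := by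
  have := (sqrtM_posSemidef h).isHermitian
  rwa [Matrix.IsHermitian, conjTranspose_eq_transpose_of_trivial] at this

lemma sqrtM_posDef {A : Matrix (Fin n) (Fin n) ℝ} (h : A.PosDef) :
    (sqrtM A).PosDef := by
  have hpsd := sqrtM_posSemidef h.posSemidef
  refine PosDef.of_dotProduct_mulVec_pos hpsd.isHermitian fun x hx =>
    lt_of_le_of_ne (hpsd.dotProduct_mulVec_nonneg x) fun heq => ?_
  have h0 : sqrtM A *ᵥ x = 0 := (hpsd.dotProduct_mulVec_zero_iff x).mp heq.symm
  have hAx : A *ᵥ x = 0 := by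
    rw [← sqrtM_mul_self h.posSemidef, ← mulVec_mulVec, h0, mulVec_zero]
  have := h.dotProduct_mulVec_pos hx
  rw [hAx, dotProduct_zero] at this
  exact lt_irrefl 0 this

lemma posSemidef_vecMulVec (m : Fin n → ℝ) : (vecMulVec m m).PosSemidef := by
  refine PosSemidef.of_dotProduct_mulVec_nonneg ?_ ?_
  · ext i j
    simp [vecMulVec, conjTranspose_eq_transpose_of_trivial, mul_comm]
  · intro x
    have : vecMulVec m m *ᵥ x = (m ⬝ᵥ x) • m := by
      ext i; simp only [vecMulVec, mulVec, dotProduct, Pi.smul_apply, smul_eq_mul, of_apply]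
      rw [Finset.sum_mul]
      exact Finset.sum_congr rfl fun j _ => by ring
    rw [this]
    simp only [dotProduct_smul, star_trivial]
    have : x ⬝ᵥ m = m ⬝ᵥ x := dotProduct_comm x m
    rw [smul_eq_mul, this]
    exact mul_self_nonneg _


lemma trace_transpose_mul_self_nonneg (X : Matrix (Fin n) (Fin n) ℝ) :
    0 ≤ (Xᵀ * X).trace := by
  rw [Matrix.trace]
  refine Finset.sum_nonneg fun i _ => ?_
  rw [Matrix.diag_apply, Matrix.mul_apply]
  exact Finset.sum_nonneg fun j _ => by simp [mul_self_nonneg]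

lemma inv_mul_self_of_posDef {Q : Matrix (Fin n) (Fin n) ℝ} (hQ : Q.PosDef) :
    Q⁻¹ * Q = 1 := Matrix.nonsing_inv_mul Q hQ.det_pos.ne'.isUnit

lemma mul_inv_self_of_posDef {Q : Matrix (Fin n) (Fin n) ℝ} (hQ : Q.PosDef) :
    Q * Q⁻¹ = 1 := Matrix.mul_nonsing_inv Q hQ.det_pos.ne'.isUnit

lemma transpose_inv_sqrtM {A : Matrix (Fin n) (Fin n) ℝ} (hA : A.PosDef) :
    ((sqrtM A)⁻¹)ᵀ = (sqrtM A)⁻¹ := by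
  rw [Matrix.transpose_nonsing_inv, sqrtM_transpose hA.posSemidef]

/-- `P * A * P = 1` where `P = (√A)⁻¹`. -/
lemma inv_sqrtM_mul_mul {A : Matrix (Fin n) (Fin n) ℝ} (hA : A.PosDef) :
    (sqrtM A)⁻¹ * A * (sqrtM A)⁻¹ = 1 := by
  set R := sqrtM A with hR
  have hRpd : R.PosDef := sqrtM_posDef hA
  have hRR : R * R = A := sqrtM_mul_self hA.posSemidef
  calc R⁻¹ * A * R⁻¹ = R⁻¹ * (R * R) * R⁻¹ := by rw [hRR]
    _ = (R⁻¹ * R) * (R * R⁻¹) := by simp only [Matrix.mul_assoc]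
    _ = 1 := by rw [inv_mul_self_of_posDef hRpd, mul_inv_self_of_posDef hRpd, Matrix.one_mul]

/-- `P * A = √A` where `P = (√A)⁻¹`. -/
lemma inv_sqrtM_mul {A : Matrix (Fin n) (Fin n) ℝ} (hA : A.PosDef) :
    (sqrtM A)⁻¹ * A = sqrtM A := by
  set R := sqrtM A with hR
  have hRpd : R.PosDef := sqrtM_posDef hA
  have hRR : R * R = A := sqrtM_mul_self hA.posSemidef
  calc R⁻¹ * A = R⁻¹ * (R * R) := by rw [hRR]
    _ = (R⁻¹ * R) * R := by simp only [Matrix.mul_assoc]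
    _ = R := by rw [inv_mul_self_of_posDef hRpd, Matrix.one_mul]

/-- AM-GM trace inequality: `tr √B ≤ ½ (tr ((√A)⁻¹ B) + tr √A)`. -/
lemma trace_sqrtM_le {A B : Matrix (Fin n) (Fin n) ℝ} (hA : A.PosDef) (hB : B.PosSemidef) :
    (sqrtM B).trace ≤ (1/2) * (((sqrtM A)⁻¹ * B).trace + (sqrtM A).trace) := by
  set Q := sqrtM A with hQdef
  have hQ : Q.PosDef := sqrtM_posDef hA
  set P := Q⁻¹ with hPdef
  have hP : P.PosDef := hQ.inv
  set R := sqrtM P with hRdef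
  have hR : R.PosDef := sqrtM_posDef hP
  have hRR : R * R = P := sqrtM_mul_self hP.posSemidef
  set Bs := sqrtM B with hBsdef
  have hBB : Bs * Bs = B := sqrtM_mul_self hB
  have hBsT : Bsᵀ = Bs := sqrtM_transpose hB
  have hRT : Rᵀ = R := sqrtM_transpose hP.posSemidef
  set C := R * Bs with hCdef
  set D := R⁻¹ with hDdef
  have hDT : Dᵀ = D := by rw [hDdef, Matrix.transpose_nonsing_inv, hRT]
  have key : 0 ≤ ((C - D)ᵀ * (C - D)).trace := trace_transpose_mul_self_nonneg _
  have hCtC : (Cᵀ * C).trace = (P * B).trace := by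
    rw [hCdef, Matrix.transpose_mul, hBsT, hRT]
    rw [Matrix.mul_assoc Bs R, ← Matrix.mul_assoc R R, hRR, Matrix.trace_mul_comm,
      Matrix.mul_assoc, hBB]
  have hDtD : (Dᵀ * D).trace = Q.trace := by
    rw [hDT, hDdef, ← Matrix.mul_inv_rev, hRR, hPdef,
      Matrix.nonsing_inv_nonsing_inv Q hQ.det_pos.ne'.isUnit]
  have hDtC : (Dᵀ * C).trace = Bs.trace := by
    rw [hDT, hDdef, hCdef, ← Matrix.mul_assoc, inv_mul_self_of_posDef hR, Matrix.one_mul]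
  have hCtD : (Cᵀ * D).trace = Bs.trace := by
    rw [hCdef, Matrix.transpose_mul, hBsT, hRT, hDdef, Matrix.mul_assoc,
      mul_inv_self_of_posDef hR, Matrix.mul_one]
  have expand : ((C - D)ᵀ * (C - D)).trace
      = (Cᵀ * C).trace + (Dᵀ * D).trace - (Cᵀ * D).trace - (Dᵀ * C).trace := by
    rw [Matrix.transpose_sub, Matrix.sub_mul, Matrix.mul_sub, Matrix.mul_sub,
      Matrix.trace_sub, Matrix.trace_sub, Matrix.trace_sub]
    ring
  rw [expand, hCtC, hDtD, hDtC, hCtD] at key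
  linarith


section Helpers

variable {ι κ : Type*} [Fintype ι] [Fintype κ]

lemma dot_self_nonneg (v : ι → ℝ) : 0 ≤ v ⬝ᵥ v :=
  Finset.sum_nonneg fun i _ => mul_self_nonneg _

lemma dot_sq_le (v w : ι → ℝ) : (v ⬝ᵥ w) ^ 2 ≤ (v ⬝ᵥ v) * (w ⬝ᵥ w) := by
  have := Finset.sum_mul_sq_le_sq_mul_sq Finset.univ v w
  simpa [dotProduct, pow_two] using this

lemma mulVec_dot_self (X : Matrix κ ι ℝ) (u : ι → ℝ) :
    (X *ᵥ u) ⬝ᵥ (X *ᵥ u) = u ⬝ᵥ ((Xᵀ * X) *ᵥ u) := by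
  rw [Matrix.dotProduct_mulVec, ← Matrix.mulVec_transpose, Matrix.mulVec_mulVec]
  exact dotProduct_comm _ _

lemma proj_contract {P : Matrix ι ι ℝ} (hT : Pᵀ = P) (hP : P * P = P) (u : ι → ℝ) :
    u ⬝ᵥ (P *ᵥ u) ≤ u ⬝ᵥ u := by
  set p := P *ᵥ u with hp
  have e1 : u ⬝ᵥ (P *ᵥ u) = p ⬝ᵥ p := by
    conv_lhs => rw [← hP, ← Matrix.mulVec_mulVec, Matrix.dotProduct_mulVec,
      ← Matrix.mulVec_transpose, hT]
  have e2 : (p ⬝ᵥ p) ^ 2 ≤ (u ⬝ᵥ u) * (p ⬝ᵥ p) := by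
    have cs := dot_sq_le u p
    rwa [← e1, e1] at cs
  rw [e1]
  rcases eq_or_lt_of_le (dot_self_nonneg p) with h0 | h0
  · rw [← h0]; exact dot_self_nonneg u
  · nlinarith [e2, h0]

lemma dot_le_of_contract {C : Matrix ι ι ℝ}
    (hC : ∀ w : ι → ℝ, (C *ᵥ w) ⬝ᵥ (C *ᵥ w) ≤ w ⬝ᵥ w) (v : ι → ℝ) :
    v ⬝ᵥ (C *ᵥ v) ≤ v ⬝ᵥ v := by
  set w := C *ᵥ v with hw
  have cs := dot_sq_le v w
  have hww := hC v
  have hvv := dot_self_nonneg v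
  have hww0 := dot_self_nonneg w
  nlinarith [cs, hww, hvv, hww0]

end Helpers

lemma trace_conj_le {Qh C : Matrix (Fin n) (Fin n) ℝ} (hQhT : Qhᵀ = Qh)
    (hC : ∀ w : Fin n → ℝ, (C *ᵥ w) ⬝ᵥ (C *ᵥ w) ≤ w ⬝ᵥ w) :
    (Qh * C * Qh).trace ≤ (Qh * Qh).trace := by
  rw [Matrix.trace, Matrix.trace]
  refine Finset.sum_le_sum fun i _ => ?_
  set v : Fin n → ℝ := fun a => Qh a i with hv
  have lhs_eq : (Qh * C * Qh).diag i = v ⬝ᵥ (C *ᵥ v) := by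
    simp only [Matrix.diag_apply, Matrix.mul_apply, dotProduct, Matrix.mulVec, hv,
      Finset.sum_mul, Finset.mul_sum]
    rw [Finset.sum_comm]
    refine Finset.sum_congr rfl fun a _ => Finset.sum_congr rfl fun b _ => ?_
    have : Qh i a = Qh a i := by conv_lhs => rw [← hQhT, Matrix.transpose_apply]
    rw [this]; ring
  have rhs_eq : (Qh * Qh).diag i = v ⬝ᵥ v := by
    simp only [Matrix.diag_apply, Matrix.mul_apply, dotProduct, hv]
    refine Finset.sum_congr rfl fun a _ => ?_
    have : Qh i a = Qh a i := by conv_lhs => rw [← hQhT, Matrix.transpose_apply]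
    rw [this]
  rw [lhs_eq, rhs_eq]
  exact dot_le_of_contract hC v

/-- Key duality lemma: `tr((√(NNᵀ))⁻¹ * M * Nᵀ) ≤ tr √(MMᵀ)`. -/
lemma key_ineq {ι : Type*} [Fintype ι] {N M : Matrix (Fin n) ι ℝ}
    (hA : (N * Nᵀ).PosDef) (hB : (M * Mᵀ).PosDef) :
    ((sqrtM (N * Nᵀ))⁻¹ * (M * Nᵀ)).trace ≤ (sqrtM (M * Mᵀ)).trace := by
  set A := N * Nᵀ with hAdef
  set B := M * Mᵀ with hBdef
  set P := (sqrtM A)⁻¹ with hPdef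
  have hPT : Pᵀ = P := transpose_inv_sqrtM hA
  set Q := sqrtM B with hQdef
  have hQpd : Q.PosDef := sqrtM_posDef hB
  have hQQ : Q * Q = B := sqrtM_mul_self hB.posSemidef
  set Qh := sqrtM Q with hQhdef
  have hQhT : Qhᵀ = Qh := sqrtM_transpose hQpd.posSemidef
  have hQhQh : Qh * Qh = Q := sqrtM_mul_self hQpd.posSemidef
  set U := Q⁻¹ * M with hUdef
  have hQU : Q * U = M := by
    rw [hUdef, ← Matrix.mul_assoc, mul_inv_self_of_posDef hQpd, Matrix.one_mul]
  have hUUT : U * Uᵀ = 1 := by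
    rw [hUdef, Matrix.transpose_mul, Matrix.transpose_nonsing_inv,
      (sqrtM_transpose hB.posSemidef : Qᵀ = Q)]
    calc Q⁻¹ * M * (Mᵀ * Q⁻¹) = Q⁻¹ * (M * Mᵀ) * Q⁻¹ := by simp only [Matrix.mul_assoc]
      _ = 1 := inv_sqrtM_mul_mul hB
  set C := U * Nᵀ * P with hCdef
  have hPAP : P * A * P = 1 := inv_sqrtM_mul_mul hA
  have hcontract : ∀ w : Fin n → ℝ, (C *ᵥ w) ⬝ᵥ (C *ᵥ w) ≤ w ⬝ᵥ w := by
    intro w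
    have hCw : C *ᵥ w = U *ᵥ ((Nᵀ * P) *ᵥ w) := by
      rw [Matrix.mulVec_mulVec, ← Matrix.mul_assoc, hCdef]
    set u := (Nᵀ * P) *ᵥ w with hu
    have huu : u ⬝ᵥ u = w ⬝ᵥ w := by
      rw [hu, mulVec_dot_self]
      have : (Nᵀ * P)ᵀ * (Nᵀ * P) = 1 := by
        rw [Matrix.transpose_mul, Matrix.transpose_transpose, hPT]
        calc P * N * (Nᵀ * P) = P * (N * Nᵀ) * P := by simp only [Matrix.mul_assoc]
          _ = 1 := hPAP
      rw [this, Matrix.one_mulVec]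
    have step1 : (U *ᵥ u) ⬝ᵥ (U *ᵥ u) ≤ u ⬝ᵥ u := by
      rw [mulVec_dot_self]
      refine proj_contract ?_ ?_ u
      · rw [Matrix.transpose_mul, Matrix.transpose_transpose]
      · calc Uᵀ * U * (Uᵀ * U) = Uᵀ * (U * Uᵀ) * U := by simp only [Matrix.mul_assoc]
          _ = Uᵀ * U := by rw [hUUT, Matrix.mul_one]
    rw [hCw, ← huu]
    exact step1.trans (le_of_eq rfl)
  have trace_eq : (P * (M * Nᵀ)).trace = (Qh * C * Qh).trace := by
    rw [← hQU]
    calc (P * (Q * U * Nᵀ)).trace = ((Q * U * Nᵀ) * P).trace := Matrix.trace_mul_comm _ _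
      _ = (Q * (U * Nᵀ * P)).trace := by simp only [Matrix.mul_assoc]
      _ = (Qh * Qh * C).trace := by rw [hQhQh, hCdef, Matrix.mul_assoc U]
      _ = (Qh * C * Qh).trace := by
          rw [Matrix.trace_mul_cycle Qh C Qh]
  calc ((sqrtM A)⁻¹ * (M * Nᵀ)).trace = (Qh * C * Qh).trace := trace_eq
    _ ≤ (Qh * Qh).trace := trace_conj_le hQhT hcontract
    _ = Q.trace := by rw [hQhQh]


section Blocks

variable {S : Matrix (Fin n) (Fin n) ℝ}

/-- The block matrix `[m | √S]`. -/
noncomputable def Mblk (S : Matrix (Fin n) (Fin n) ℝ) (m : Fin n → ℝ) :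
    Matrix (Fin n) (Unit ⊕ Fin n) ℝ :=
  Matrix.of fun i j => Sum.elim (fun _ => m i) (fun k => sqrtM S i k) j

lemma Mblk_mul (hS : S.PosDef) (w z : Fin n → ℝ) :
    Mblk S w * (Mblk S z)ᵀ = vecMulVec w z + S := by
  ext i i'
  rw [Matrix.mul_apply]
  have : ∀ j : Unit ⊕ Fin n, Mblk S w i j * (Mblk S z)ᵀ j i'
      = Sum.elim (fun _ : Unit => w i * z i') (fun k => sqrtM S i k * sqrtM S i' k) j := by
    rintro (u | k) <;> simp [Mblk]
  rw [Finset.sum_congr rfl fun j _ => this j, Fintype.sum_sum_type]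
  have hSsym : (sqrtM S)ᵀ = sqrtM S := sqrtM_transpose hS.posSemidef
  have hSS : S i i' = ∑ k, sqrtM S i k * sqrtM S i' k := by
    conv_lhs => rw [← sqrtM_mul_self hS.posSemidef]
    rw [Matrix.mul_apply]
    refine Finset.sum_congr rfl fun k _ => ?_
    congr 1
    conv_lhs => rw [← hSsym, Matrix.transpose_apply]
  simp [Matrix.add_apply, vecMulVec, hSS.symm]

lemma Am_posDef (hS : S.PosDef) (m : Fin n → ℝ) : (vecMulVec m m + S).PosDef :=
  Matrix.PosDef.posSemidef_add (posSemidef_vecMulVec m) hS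

/-- The subgradient inequality instance of the key lemma. -/
lemma ell_le (hS : S.PosDef) (z w : Fin n → ℝ) :
    ((sqrtM (vecMulVec z z + S))⁻¹ * (vecMulVec w z + S)).trace
      ≤ (sqrtM (vecMulVec w w + S)).trace := by
  have h1 := Mblk_mul hS z z
  have h2 := Mblk_mul hS w w
  have h3 := Mblk_mul hS w z
  have hA : (Mblk S z * (Mblk S z)ᵀ).PosDef := by rw [h1]; exact Am_posDef hS z
  have hB : (Mblk S w * (Mblk S w)ᵀ).PosDef := by rw [h2]; exact Am_posDef hS w
  have := key_ineq hA hB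
  rwa [h1, h2, h3] at this

lemma trace_mul_vecMulVec (P : Matrix (Fin n) (Fin n) ℝ) (a b : Fin n → ℝ) :
    (P * vecMulVec a b).trace = b ⬝ᵥ (P *ᵥ a) := by
  simp only [Matrix.trace, Matrix.diag_apply, Matrix.mul_apply, vecMulVec, Matrix.of_apply,
    dotProduct, Matrix.mulVec, Finset.mul_sum]
  refine Finset.sum_congr rfl fun i _ => Finset.sum_congr rfl fun j _ => by ring

lemma sym_dot {P : Matrix (Fin n) (Fin n) ℝ} (hP : Pᵀ = P) (a b : Fin n → ℝ) :
    a ⬝ᵥ (P *ᵥ b) = (P *ᵥ a) ⬝ᵥ b := by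
  rw [Matrix.dotProduct_mulVec, ← Matrix.mulVec_transpose, hP]

lemma quad_bound (P : Matrix (Fin n) (Fin n) ℝ) (h : Fin n → ℝ) :
    h ⬝ᵥ (P *ᵥ h) ≤ (∑ i, ∑ j, |P i j|) * (h ⬝ᵥ h) := by
  have hsq : ∀ i, h i * h i ≤ h ⬝ᵥ h := fun i =>
    Finset.single_le_sum (f := fun j => h j * h j) (fun j _ => mul_self_nonneg _)
      (Finset.mem_univ i)
  have hdd : 0 ≤ h ⬝ᵥ h := dot_self_nonneg h
  calc h ⬝ᵥ (P *ᵥ h) = ∑ i, ∑ j, h i * (P i j * h j) := by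
        simp only [dotProduct, Matrix.mulVec, Finset.mul_sum]
    _ ≤ ∑ i, ∑ j, |P i j| * (h ⬝ᵥ h) := by
        refine Finset.sum_le_sum fun i _ => Finset.sum_le_sum fun j _ => ?_
        have h1 : h i * (P i j * h j) ≤ |P i j| * (|h i| * |h j|) := by
          calc h i * (P i j * h j) ≤ |h i * (P i j * h j)| := le_abs_self _
            _ = |P i j| * (|h i| * |h j|) := by rw [abs_mul, abs_mul]; ring
        refine h1.trans ?_
        refine mul_le_mul_of_nonneg_left ?_ (abs_nonneg _)
        nlinarith [hsq i, hsq j, sq_abs (h i), sq_abs (h j), sq_nonneg (|h i| - |h j|),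
          abs_nonneg (h i), abs_nonneg (h j)]
    _ = (∑ i, ∑ j, |P i j|) * (h ⬝ᵥ h) := by
        rw [Finset.sum_mul]
        exact Finset.sum_congr rfl fun i _ => by rw [Finset.sum_mul]

end Blocks


section Grad

variable {S : Matrix (Fin n) (Fin n) ℝ}

lemma lower_bound (hS : S.PosDef) (m h : Fin n → ℝ) :
    (sqrtM (vecMulVec m m + S)).trace + ((sqrtM (vecMulVec m m + S))⁻¹ *ᵥ m) ⬝ᵥ h
      ≤ (sqrtM (vecMulVec (m + h) (m + h) + S)).trace := by
  have hA := Am_posDef hS m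
  have hPT := transpose_inv_sqrtM hA
  have hdec : vecMulVec (m + h) m + S = (vecMulVec m m + S) + vecMulVec h m := by
    ext i j
    simp only [Matrix.add_apply, vecMulVec, Matrix.of_apply, Pi.add_apply]
    ring
  have key := ell_le hS m (m + h)
  rw [hdec, Matrix.mul_add, Matrix.trace_add, inv_sqrtM_mul hA, trace_mul_vecMulVec,
    sym_dot hPT] at key
  exact key

lemma upper_bound (hS : S.PosDef) (m h : Fin n → ℝ) :
    (sqrtM (vecMulVec (m + h) (m + h) + S)).trace
      ≤ (sqrtM (vecMulVec m m + S)).trace + ((sqrtM (vecMulVec m m + S))⁻¹ *ᵥ m) ⬝ᵥ h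
        + (1/2) * (h ⬝ᵥ ((sqrtM (vecMulVec m m + S))⁻¹ *ᵥ h)) := by
  have hA := Am_posDef hS m
  have hPT := transpose_inv_sqrtM hA
  set P := (sqrtM (vecMulVec m m + S))⁻¹ with hPdef
  have hB := (Am_posDef hS (m + h)).posSemidef
  have key := trace_sqrtM_le hA hB
  have hdec : vecMulVec (m + h) (m + h) + S
      = (vecMulVec m m + S) + (vecMulVec m h + (vecMulVec h m + vecMulVec h h)) := by
    ext i j
    simp only [Matrix.add_apply, vecMulVec, Matrix.of_apply, Pi.add_apply]
    ring
  have e1 : h ⬝ᵥ (P *ᵥ m) = (P *ᵥ m) ⬝ᵥ h := dotProduct_comm _ _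
  have e2 : m ⬝ᵥ (P *ᵥ h) = (P *ᵥ m) ⬝ᵥ h := sym_dot hPT m h
  have expand : (P * (vecMulVec (m + h) (m + h) + S)).trace
      = (sqrtM (vecMulVec m m + S)).trace + 2 * ((P *ᵥ m) ⬝ᵥ h) + h ⬝ᵥ (P *ᵥ h) := by
    rw [hdec, Matrix.mul_add, Matrix.trace_add, inv_sqrtM_mul hA]
    rw [Matrix.mul_add, Matrix.trace_add, Matrix.mul_add, Matrix.trace_add,
      trace_mul_vecMulVec, trace_mul_vecMulVec, trace_mul_vecMulVec, e1, e2]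
    ring
  rw [expand] at key
  linarith [key]

end Grad

end LeonAux


open LeonAux

theorem leon_dual_gradient_and_convexity {n : ℕ} {S : Matrix (Fin n) (Fin n) ℝ}
    (hS : S.PosDef) {η : ℝ} (hη : 0 < η) :
    ConvexOn ℝ Set.univ (fun m : Fin n → ℝ => η * (sqrtM (vecMulVec m m + S)).trace) ∧
    ∀ m : Fin n → ℝ,
      HasGradientAt
        (fun x : EuclideanSpace ℝ (Fin n) =>
          η * (sqrtM (vecMulVec ((WithLp.equiv 2 (Fin n → ℝ)) x)
            ((WithLp.equiv 2 (Fin n → ℝ)) x) + S)).trace)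
        ((WithLp.equiv 2 (Fin n → ℝ)).symm
          (η • ((sqrtM (vecMulVec m m + S))⁻¹ *ᵥ m)))
        ((WithLp.equiv 2 (Fin n → ℝ)).symm m) := by
  constructor
  · -- Convexity
    refine ⟨convex_univ, ?_⟩
    intro x _ y _ a b ha hb hab
    simp only [smul_eq_mul]
    set z : Fin n → ℝ := a • x + b • y with hz
    have hAz := Am_posDef hS z
    have hzi : ∀ k, z k = a * x k + b * y k := fun k => by simp [hz]
    have hcomb : vecMulVec z z + S
        = a • (vecMulVec x z + S) + b • (vecMulVec y z + S) := by
      ext i j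
      simp only [Matrix.add_apply, Matrix.smul_apply, vecMulVec, Matrix.of_apply, smul_eq_mul]
      rw [hzi i]
      linear_combination (-(S i j)) * hab
    have e0 : (sqrtM (vecMulVec z z + S)).trace
        = ((sqrtM (vecMulVec z z + S))⁻¹ * (vecMulVec z z + S)).trace := by
      rw [inv_sqrtM_mul hAz]
    have e2 : ((sqrtM (vecMulVec z z + S))⁻¹ * (vecMulVec z z + S)).trace
        = a * ((sqrtM (vecMulVec z z + S))⁻¹ * (vecMulVec x z + S)).trace
          + b * ((sqrtM (vecMulVec z z + S))⁻¹ * (vecMulVec y z + S)).trace := by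
      nth_rewrite 2 [hcomb]
      rw [Matrix.mul_add, Matrix.mul_smul, Matrix.mul_smul, Matrix.trace_add,
        Matrix.trace_smul, Matrix.trace_smul]
      simp [smul_eq_mul]
    have l1 := ell_le hS z x
    have l2 := ell_le hS z y
    have hmain : (sqrtM (vecMulVec z z + S)).trace
        ≤ a * (sqrtM (vecMulVec x x + S)).trace + b * (sqrtM (vecMulVec y y + S)).trace := by
      rw [e0, e2]
      exact add_le_add (mul_le_mul_of_nonneg_left l1 ha) (mul_le_mul_of_nonneg_left l2 hb)
    calc η * (sqrtM (vecMulVec z z + S)).trace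
        ≤ η * (a * (sqrtM (vecMulVec x x + S)).trace
            + b * (sqrtM (vecMulVec y y + S)).trace) := mul_le_mul_of_nonneg_left hmain hη.le
      _ = a * (η * (sqrtM (vecMulVec x x + S)).trace)
            + b * (η * (sqrtM (vecMulVec y y + S)).trace) := by ring
  · -- Gradient
    intro m
    have hA := Am_posDef hS m
    set P := (sqrtM (vecMulVec m m + S))⁻¹ with hPdef
    set Cp := ∑ i, ∑ j, |P i j| with hCpdef
    have hCp0 : 0 ≤ Cp :=
      Finset.sum_nonneg fun i _ => Finset.sum_nonneg fun j _ => abs_nonneg _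
    set K := η * Cp / 2 with hKdef
    have hK0 : 0 ≤ K := by positivity
    rw [hasGradientAt_iff_isLittleO_nhds_zero]
    have main : ∀ h : EuclideanSpace ℝ (Fin n),
        ((fun x : EuclideanSpace ℝ (Fin n) =>
          η * (sqrtM (vecMulVec ((WithLp.equiv 2 (Fin n → ℝ)) x)
            ((WithLp.equiv 2 (Fin n → ℝ)) x) + S)).trace)
            ((WithLp.equiv 2 (Fin n → ℝ)).symm m + h)
          - (fun x : EuclideanSpace ℝ (Fin n) =>
          η * (sqrtM (vecMulVec ((WithLp.equiv 2 (Fin n → ℝ)) x)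
            ((WithLp.equiv 2 (Fin n → ℝ)) x) + S)).trace)
            ((WithLp.equiv 2 (Fin n → ℝ)).symm m)
          - inner ℝ ((WithLp.equiv 2 (Fin n → ℝ)).symm
              (η • ((sqrtM (vecMulVec m m + S))⁻¹ *ᵥ m))) h)
          ∈ Set.Icc (0 : ℝ) (K * (‖h‖ * ‖h‖)) := by
      intro h
      set h' : Fin n → ℝ := (WithLp.equiv 2 (Fin n → ℝ)) h with hh'
      have eq1 : (WithLp.equiv 2 (Fin n → ℝ)) ((WithLp.equiv 2 (Fin n → ℝ)).symm m + h)
          = m + h' := by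
        rfl
      have eq2 : (inner ℝ ((WithLp.equiv 2 (Fin n → ℝ)).symm
            (η • ((sqrtM (vecMulVec m m + S))⁻¹ *ᵥ m))) h : ℝ)
          = η * ((P *ᵥ m) ⬝ᵥ h') := by
        rw [PiLp.inner_apply]
        simp only [RCLike.inner_apply, conj_trivial, WithLp.equiv_symm_apply, PiLp.toLp_apply,
          Pi.smul_apply, smul_eq_mul, dotProduct, Finset.mul_sum]
        exact Finset.sum_congr rfl fun i _ => by rw [hh', WithLp.equiv_apply]; ring
      have hnorm : ‖h‖ = Real.sqrt (h' ⬝ᵥ h') := by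
        rw [EuclideanSpace.norm_eq]
        congr 1
        rw [dotProduct]
        refine Finset.sum_congr rfl fun i _ => ?_
        rw [hh', WithLp.equiv_apply, Real.norm_eq_abs, sq_abs, pow_two]
      have eq3 : ‖h‖ * ‖h‖ = h' ⬝ᵥ h' := by
        rw [hnorm, Real.mul_self_sqrt (dot_self_nonneg h')]
      simp only [eq1, Equiv.apply_symm_apply, eq2]
      have lb := lower_bound hS m h'
      have ub := upper_bound hS m h'
      have qb := quad_bound P h'
      constructor
      · have := mul_le_mul_of_nonneg_left lb hη.le
        simp only [mul_add] at this
        linarith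
      · have := mul_le_mul_of_nonneg_left ub hη.le
        have h2 : η * ((1:ℝ)/2 * (h' ⬝ᵥ (P *ᵥ h'))) ≤ K * (h' ⬝ᵥ h') := by
          rw [hKdef]
          have := mul_le_mul_of_nonneg_left qb (by positivity : (0:ℝ) ≤ η / 2)
          calc η * (1/2 * (h' ⬝ᵥ (P *ᵥ h'))) = η / 2 * (h' ⬝ᵥ (P *ᵥ h')) := by ring
            _ ≤ η / 2 * (Cp * (h' ⬝ᵥ h')) := by
                exact mul_le_mul_of_nonneg_left qb (by positivity)
            _ = η * Cp / 2 * (h' ⬝ᵥ h') := by ring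
        rw [eq3]
        simp only [mul_add] at this
        linarith
    refine Asymptotics.isLittleO_iff.mpr ?_
    intro c hc
    have hδ : 0 < c / (K + 1) := by positivity
    filter_upwards [Metric.ball_mem_nhds (0 : EuclideanSpace ℝ (Fin n)) hδ] with h hh
    rw [mem_ball_zero_iff] at hh
    have hmem := main h
    have h1 : 0 ≤ ((fun x : EuclideanSpace ℝ (Fin n) =>
        η * (sqrtM (vecMulVec ((WithLp.equiv 2 (Fin n → ℝ)) x)
          ((WithLp.equiv 2 (Fin n → ℝ)) x) + S)).trace)
          ((WithLp.equiv 2 (Fin n → ℝ)).symm m + h)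
        - _ - _) := hmem.1
    have h2 := hmem.2
    rw [Real.norm_eq_abs, abs_of_nonneg hmem.1]
    have hn0 : (0:ℝ) ≤ ‖h‖ := norm_nonneg _
    have hKc : K * ‖h‖ ≤ c := by
      have h3 : ‖h‖ * (K + 1) < c :=
        (lt_div_iff₀ (show (0:ℝ) < K + 1 by linarith)).mp hh
      nlinarith [hn0, hK0]
    calc _ ≤ K * (‖h‖ * ‖h‖) := hmem.2
      _ = (K * ‖h‖) * ‖h‖ := by ring
      _ ≤ c * ‖h‖ := mul_le_mul_of_nonneg_right hKc hn0
end

section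
/- Hölder-smooth Bregman lower bound on gradient differences: let f : ℝ^n → ℝ be convex and differentiable with ‖∇f(x) − ∇f(y)‖_* ≤ L ‖x − y‖^ν for all x, y (where ν ∈ (0, 1], L > 0, and ‖·‖, ‖·‖_* are a norm and its dual). Then for all x, y, ‖∇f(x) − ∇f(y)‖_*^{1 + 1/ν} ≤ ((1+ν)/ν) · L^{1/ν} · B_f(y; x), where B_f(y; x) = f(y) − f(x) − ⟨∇f(x), y − x⟩. -/
open Matrix
open scoped Classical

section NormFacts
variable {n : ℕ} (N : (Fin n → ℝ) → ℝ)
  (hN0 : ∀ x, N x = 0 ↔ x = 0) (hNs : ∀ (c : ℝ) x, N (c • x) = |c| * N x)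
  (hNt : ∀ x y, N (x + y) ≤ N x + N y)

include hNs in
theorem N_zero : N 0 = 0 := by
  have := hNs 0 0; simpa using this

include hNs hNt in
theorem N_nonneg : ∀ x, 0 ≤ N x := by
  intro x
  have h1 : N (-x) = N x := by
    have := hNs (-1) x; simpa using this
  have h2 := hNt x (-x)
  rw [add_neg_cancel, N_zero N hNs, h1] at h2
  linarith

include hNt hNs in
theorem N_sum {ι : Type*} (s : Finset ι) (v : ι → (Fin n → ℝ)) :
    N (∑ i ∈ s, v i) ≤ ∑ i ∈ s, N (v i) := by
  classical
  induction s using Finset.induction with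
  | empty => simp [N_zero N hNs]
  | insert _ _ hni ih =>
    rename_i a s
    rw [Finset.sum_insert hni, Finset.sum_insert hni]
    exact (hNt _ _).trans (by linarith)

include hN0 hNs hNt in
theorem N_le_norm : ∀ u, N u ≤ (∑ i, N (Pi.single i 1)) * ‖u‖ := by
  intro u
  have hu : u = ∑ i, (u i) • (Pi.single i 1 : Fin n → ℝ) := by
    funext j
    simp [Finset.sum_apply, Pi.single_apply]
  calc N u ≤ ∑ i, N ((u i) • (Pi.single i 1 : Fin n → ℝ)) := by
        conv_lhs => rw [hu]
        exact N_sum N hNs hNt _ _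
    _ ≤ ∑ i, N (Pi.single i 1) * ‖u‖ := by
        apply Finset.sum_le_sum
        intro i _
        rw [hNs]
        rw [mul_comm (N _)]
        apply mul_le_mul_of_nonneg_right _ (N_nonneg N hNs hNt _)
        have := norm_le_pi_norm u i
        simpa [Real.norm_eq_abs] using this
    _ = (∑ i, N (Pi.single i 1)) * ‖u‖ := by rw [Finset.sum_mul]

include hN0 hNs hNt in
theorem N_continuous : Continuous N := by
  set C := ∑ i, N (Pi.single i (1:ℝ)) with hC
  have hC0 : 0 ≤ C := Finset.sum_nonneg fun i _ => N_nonneg N hNs hNt _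
  apply (LipschitzWith.of_dist_le_mul (K := C.toNNReal) (f := N) ?_).continuous
  intro a b
  have hneg : ∀ w, N (-w) = N w := fun w => by simpa using hNs (-1) w
  have h1 : N a - N b ≤ N (a - b) := by
    have := hNt (a - b) b; simp at this; linarith
  have h2 : N b - N a ≤ N (a - b) := by
    have := hNt (b - a) a; simp at this
    have := hneg (a - b); simp at this; linarith [this]
  have h3 : N (a - b) ≤ C * ‖a - b‖ := N_le_norm N hN0 hNs hNt _
  rw [Real.dist_eq, dist_eq_norm]
  have h4 : C * ‖a - b‖ ≤ C.toNNReal * ‖a - b‖ := by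
    apply mul_le_mul_of_nonneg_right _ (norm_nonneg _)
    simp [Real.coe_toNNReal _ hC0]
  rw [abs_sub_le_iff]
  exact ⟨h1.trans (h3.trans h4), h2.trans (h3.trans h4)⟩

include hN0 hNs hNt in
theorem norm_le_N : ∃ m > 0, ∀ u, m * ‖u‖ ≤ N u := by
  by_cases hn : ∀ u : Fin n → ℝ, u = 0
  · exact ⟨1, one_pos, fun u => by simp [hn u, N_zero N hNs]⟩
  push_neg at hn
  obtain ⟨u₁, hu₁⟩ := hn
  have hsne : (Metric.sphere (0 : Fin n → ℝ) 1).Nonempty := by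
    refine ⟨‖u₁‖⁻¹ • u₁, ?_⟩
    have : ‖u₁‖ ≠ 0 := norm_ne_zero_iff.mpr hu₁
    simp [norm_smul, abs_of_nonneg (inv_nonneg.mpr (norm_nonneg u₁)), inv_mul_cancel₀ this]
  obtain ⟨u₀, hu₀s, hu₀min⟩ := (isCompact_sphere (0 : Fin n → ℝ) 1).exists_isMinOn hsne
    ((N_continuous N hN0 hNs hNt).continuousOn)
  have hu₀n : ‖u₀‖ = 1 := by simpa using hu₀s
  have hm : 0 < N u₀ := by
    rcases (N_nonneg N hNs hNt u₀).lt_or_eq with h | h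
    · exact h
    · exfalso
      have : u₀ = 0 := (hN0 u₀).mp h.symm
      rw [this] at hu₀n; simp at hu₀n
  refine ⟨N u₀, hm, fun u => ?_⟩
  by_cases hu : u = 0
  · simp [hu, N_zero N hNs]
  have hn0 : ‖u‖ ≠ 0 := norm_ne_zero_iff.mpr hu
  have hmem : ‖u‖⁻¹ • u ∈ Metric.sphere (0 : Fin n → ℝ) 1 := by
    simp [norm_smul, abs_of_nonneg (inv_nonneg.mpr (norm_nonneg u)), inv_mul_cancel₀ hn0]
  have := hu₀min hmem
  have h2 : N u₀ ≤ N (‖u‖⁻¹ • u) := this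
  rw [hNs] at h2
  rw [abs_of_nonneg (inv_nonneg.mpr (norm_nonneg u))] at h2
  have h3 : N u₀ * ‖u‖ ≤ ‖u‖⁻¹ * N u * ‖u‖ :=
    mul_le_mul_of_nonneg_right h2 (norm_nonneg u)
  calc N u₀ * ‖u‖ ≤ ‖u‖⁻¹ * N u * ‖u‖ := h3
    _ = N u := by field_simp

end NormFacts


section Dual
variable {n : ℕ} (N : (Fin n → ℝ) → ℝ)
  (hN0 : ∀ x, N x = 0 ↔ x = 0) (hNs : ∀ (c : ℝ) x, N (c • x) = |c| * N x)
  (hNt : ∀ x y, N (x + y) ≤ N x + N y)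

theorem dotP_continuous (g : Fin n → ℝ) : Continuous fun u : Fin n → ℝ => g ⬝ᵥ u := by
  unfold dotProduct
  exact continuous_finset_sum _ fun i _ => continuous_const.mul (continuous_apply i)

include hN0 hNs hNt in
theorem dual_bddAbove (g : Fin n → ℝ) :
    BddAbove (Set.range fun u : {u : Fin n → ℝ // N u ≤ 1} => g ⬝ᵥ u.1) := by
  obtain ⟨m, hm, hmN⟩ := norm_le_N N hN0 hNs hNt
  refine ⟨(∑ i, |g i|) * (1/m), ?_⟩
  rintro r ⟨⟨u, hu⟩, rfl⟩
  have h1 : g ⬝ᵥ u ≤ (∑ i, |g i|) * ‖u‖ := by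
    calc g ⬝ᵥ u = ∑ i, g i * u i := rfl
      _ ≤ ∑ i, |g i| * ‖u‖ := by
          apply Finset.sum_le_sum; intro i _
          calc g i * u i ≤ |g i * u i| := le_abs_self _
            _ = |g i| * |u i| := abs_mul _ _
            _ ≤ |g i| * ‖u‖ := by
                apply mul_le_mul_of_nonneg_left _ (abs_nonneg _)
                simpa [Real.norm_eq_abs] using norm_le_pi_norm u i
      _ = (∑ i, |g i|) * ‖u‖ := (Finset.sum_mul _ _ _).symm
  have h2 : ‖u‖ ≤ 1/m := by
    rw [le_div_iff₀ hm, mul_comm]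
    exact (hmN u).trans hu
  calc g ⬝ᵥ u ≤ (∑ i, |g i|) * ‖u‖ := h1
    _ ≤ (∑ i, |g i|) * (1/m) :=
      mul_le_mul_of_nonneg_left h2 (Finset.sum_nonneg fun i _ => abs_nonneg _)

include hN0 hNs hNt in
theorem dual_nonneg (g : Fin n → ℝ) :
    0 ≤ ⨆ u : {u : Fin n → ℝ // N u ≤ 1}, g ⬝ᵥ u.1 := by
  have h0 : N (0 : Fin n → ℝ) ≤ 1 := by rw [N_zero N hNs]; norm_num
  have := le_ciSup (dual_bddAbove N hN0 hNs hNt g) (⟨0, h0⟩ : {u : Fin n → ℝ // N u ≤ 1})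
  simpa using this

include hN0 hNs hNt in
theorem dual_pairing (g v : Fin n → ℝ) :
    g ⬝ᵥ v ≤ (⨆ u : {u : Fin n → ℝ // N u ≤ 1}, g ⬝ᵥ u.1) * N v := by
  by_cases hv : v = 0
  · simp only [hv, dotProduct_zero]
    exact mul_nonneg (dual_nonneg N hN0 hNs hNt g) (N_nonneg N hNs hNt 0)
  have hNv : 0 < N v := by
    rcases (N_nonneg N hNs hNt v).lt_or_eq with h | h
    · exact h
    · exact absurd ((hN0 v).mp h.symm) hv
  have hmem : N ((N v)⁻¹ • v) ≤ 1 := by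
    rw [hNs, abs_of_nonneg (inv_nonneg.mpr hNv.le), inv_mul_cancel₀ hNv.ne']
  have h1 : g ⬝ᵥ ((N v)⁻¹ • v) ≤ ⨆ u : {u : Fin n → ℝ // N u ≤ 1}, g ⬝ᵥ u.1 :=
    le_ciSup (dual_bddAbove N hN0 hNs hNt g) (⟨(N v)⁻¹ • v, hmem⟩ : {u : Fin n → ℝ // N u ≤ 1})
  have h2 : g ⬝ᵥ ((N v)⁻¹ • v) = (N v)⁻¹ * (g ⬝ᵥ v) := by
    simp only [dotProduct, Finset.mul_sum, Pi.smul_apply, smul_eq_mul]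
    exact Finset.sum_congr rfl fun i _ => by ring
  rw [h2] at h1
  have := mul_le_mul_of_nonneg_right h1 hNv.le
  calc g ⬝ᵥ v = (N v)⁻¹ * (g ⬝ᵥ v) * N v := by field_simp
    _ ≤ (⨆ u : {u : Fin n → ℝ // N u ≤ 1}, g ⬝ᵥ u.1) * N v := this

include hN0 hNs hNt in
theorem dual_attained (g : Fin n → ℝ) :
    ∃ u : Fin n → ℝ, N u ≤ 1 ∧ g ⬝ᵥ u = ⨆ u : {u : Fin n → ℝ // N u ≤ 1}, g ⬝ᵥ u.1 := by
  obtain ⟨m, hm, hmN⟩ := norm_le_N N hN0 hNs hNt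
  set S : Set (Fin n → ℝ) := {u | N u ≤ 1} with hS
  have hclosed : IsClosed S := by
    have : S = N ⁻¹' Set.Iic 1 := rfl
    rw [this]
    exact IsClosed.preimage (N_continuous N hN0 hNs hNt) isClosed_Iic
  have hbdd : Bornology.IsBounded S := by
    apply (Metric.isBounded_closedBall (x := (0 : Fin n → ℝ)) (r := 1/m)).subset
    intro u hu
    simp only [Metric.mem_closedBall, dist_zero_right]
    rw [le_div_iff₀ hm, mul_comm]
    exact (hmN u).trans hu
  have hcompact : IsCompact S := Metric.isCompact_of_isClosed_isBounded hclosed hbdd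
  have hne : S.Nonempty := ⟨0, by simp [hS, N_zero N hNs]⟩
  obtain ⟨u₀, hu₀S, hmax⟩ := hcompact.exists_isMaxOn hne (dotP_continuous g).continuousOn
  haveI : Nonempty {u : Fin n → ℝ // N u ≤ 1} := ⟨⟨0, by simp [N_zero N hNs]⟩⟩
  refine ⟨u₀, hu₀S, le_antisymm ?_ ?_⟩
  · exact le_ciSup (dual_bddAbove N hN0 hNs hNt g) (⟨u₀, hu₀S⟩ : {u : Fin n → ℝ // N u ≤ 1})
  · exact ciSup_le fun u => hmax u.2

end Dual

theorem line_hasDerivAt {n : ℕ} (f : (Fin n → ℝ) → ℝ) (f' : (Fin n → ℝ) → (Fin n → ℝ))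
    (hgrad : ∀ x, HasGradientAt (fun z : EuclideanSpace ℝ (Fin n) => f ((WithLp.equiv 2 (Fin n → ℝ)) z))
      ((WithLp.equiv 2 (Fin n → ℝ)).symm (f' x)) ((WithLp.equiv 2 (Fin n → ℝ)).symm x))
    (y s : Fin n → ℝ) (τ : ℝ) :
    HasDerivAt (fun t : ℝ => f (y + t • s)) (f' (y + τ • s) ⬝ᵥ s) τ := by
  set e := WithLp.equiv 2 (Fin n → ℝ)
  have hc : HasDerivAt (fun t : ℝ => e.symm y + t • e.symm s) (e.symm s) τ := by
    simpa using ((hasDerivAt_id τ).smul_const (e.symm s)).const_add (e.symm y)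
  have hf := (hasGradientAt_iff_hasFDerivAt.mp (hgrad (y + τ • s))).comp_hasDerivAt (f := fun t : ℝ => e.symm y + t • e.symm s) (f' := e.symm s) τ
      (by simpa [e, WithLp.toLp_add, WithLp.toLp_smul] using hc)
  have h2 : ((InnerProductSpace.toDual ℝ (EuclideanSpace ℝ (Fin n))) (e.symm (f' (y + τ • s)))) (e.symm s) = f' (y + τ • s) ⬝ᵥ s := by
    simp [e, InnerProductSpace.toDual_apply_apply, PiLp.inner_apply, RCLike.inner_apply, dotProduct,
      mul_comm]
  have h3 : ((fun z => f (e z)) ∘ fun t : ℝ => e.symm y + t • e.symm s) = fun t : ℝ => f (y + t • s) := by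
    funext t
    simp [Function.comp, e]
  rw [h3, h2] at hf
  exact hf

theorem first_order {n : ℕ} (f : (Fin n → ℝ) → ℝ) (f' : (Fin n → ℝ) → (Fin n → ℝ))
    (hconv : ConvexOn ℝ Set.univ f)
    (hgrad : ∀ x, HasGradientAt (fun z : EuclideanSpace ℝ (Fin n) => f ((WithLp.equiv 2 (Fin n → ℝ)) z))
      ((WithLp.equiv 2 (Fin n → ℝ)).symm (f' x)) ((WithLp.equiv 2 (Fin n → ℝ)).symm x))
    (x z : Fin n → ℝ) : f x + f' x ⬝ᵥ (z - x) ≤ f z := by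
  set h : ℝ → ℝ := fun t => f (x + t • (z - x)) with hh
  have hconv' : ConvexOn ℝ Set.univ h := by
    have := hconv.comp_affineMap (AffineMap.lineMap x z : ℝ →ᵃ[ℝ] (Fin n → ℝ))
    have heq : (f ∘ (AffineMap.lineMap x z : ℝ →ᵃ[ℝ] (Fin n → ℝ))) = h := by
      funext t
      simp [hh, AffineMap.lineMap_apply, Function.comp]
      ring_nf
    rw [heq] at this
    simpa using this
  have hd : HasDerivAt h (f' x ⬝ᵥ (z - x)) 0 := by
    have := line_hasDerivAt f f' hgrad x (z - x) 0
    simpa using this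
  have := hconv'.le_slope_of_hasDerivAt (Set.mem_univ 0) (Set.mem_univ 1) one_pos hd
  rw [slope_def_field] at this
  have h1 : h 1 = f z := by simp [hh]
  have h0 : h 0 = f x := by simp [hh]
  rw [h1, h0] at this
  simp at this
  rw [dotProduct_sub]
  linarith

theorem descent {n : ℕ} {ν L : ℝ} (hν : 0 < ν) (hL : 0 < L)
    (N : (Fin n → ℝ) → ℝ)
    (hN0 : ∀ x, N x = 0 ↔ x = 0)
    (hNnonneg : ∀ x, 0 ≤ N x)
    (hNs : ∀ (c : ℝ) x, N (c • x) = |c| * N x)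
    (f : (Fin n → ℝ) → ℝ) (f' : (Fin n → ℝ) → (Fin n → ℝ))
    (hgrad : ∀ x, HasGradientAt (fun z : EuclideanSpace ℝ (Fin n) => f ((WithLp.equiv 2 (Fin n → ℝ)) z))
      ((WithLp.equiv 2 (Fin n → ℝ)).symm (f' x)) ((WithLp.equiv 2 (Fin n → ℝ)).symm x))
    (hpair : ∀ a b v, (f' a - f' b) ⬝ᵥ v ≤ L * N (a - b) ^ ν * N v)
    (y s : Fin n → ℝ) :
    f (y + s) ≤ f y + f' y ⬝ᵥ s + L / (1 + ν) * N s ^ (1 + ν) := by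
  have h1ν : (0:ℝ) < 1 + ν := by linarith
  by_cases hs : s = 0
  · subst hs
    simp [Real.zero_rpow h1ν.ne', (hN0 (0 : Fin n → ℝ)).mpr rfl]
  have hNspos : 0 < N s := lt_of_le_of_ne (hNnonneg s) (fun h => hs ((hN0 s).mp h.symm))
  set ψ : ℝ → ℝ := fun t =>
    f (y + t • s) - f y - t * (f' y ⬝ᵥ s) - L / (1 + ν) * t ^ (1 + ν) * N s ^ (1 + ν) with hψdef
  have hψd : ∀ t : ℝ, HasDerivAt ψ
      ((f' (y + t • s) - f' y) ⬝ᵥ s - L * t ^ ν * N s ^ (1 + ν)) t := by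
    intro t
    have h1 := line_hasDerivAt f f' hgrad y s t
    have h2 : HasDerivAt (fun t : ℝ => t * (f' y ⬝ᵥ s)) (f' y ⬝ᵥ s) t :=
      hasDerivAt_mul_const _
    have h3 : HasDerivAt (fun t : ℝ => t ^ (1 + ν)) ((1 + ν) * t ^ ν) t := by
      have := Real.hasDerivAt_rpow_const (x := t) (p := 1 + ν) (Or.inr (by linarith))
      simpa [add_sub_cancel_right] using this
    have h4 : HasDerivAt (fun t : ℝ => L / (1 + ν) * t ^ (1 + ν) * N s ^ (1 + ν))
        (L / (1 + ν) * ((1 + ν) * t ^ ν) * N s ^ (1 + ν)) t :=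
      (h3.const_mul (L / (1 + ν))).mul_const _
    have h5 := ((h1.sub_const (f y)).sub h2).sub h4
    refine h5.congr_deriv ?_
    rw [sub_dotProduct]
    field_simp
  have hdiff : Differentiable ℝ ψ := fun t => (hψd t).differentiableAt
  have hanti : AntitoneOn ψ (Set.Icc 0 1) := by
    apply antitoneOn_of_deriv_nonpos (convex_Icc 0 1) hdiff.continuous.continuousOn
      hdiff.differentiableOn
    intro t ht
    rw [interior_Icc] at ht
    rw [(hψd t).deriv]
    have heq : (y + t • s) - y = t • s := by abel
    have hb := hpair (y + t • s) y s
    rw [heq] at hb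
    have hNts : N (t • s) = t * N s := by rw [hNs, abs_of_nonneg ht.1.le]
    rw [hNts] at hb
    have hb2 : L * (t * N s) ^ ν * N s = L * t ^ ν * N s ^ (1 + ν) := by
      rw [Real.mul_rpow ht.1.le (hNnonneg s), Real.rpow_add hNspos, Real.rpow_one]
      ring
    rw [hb2] at hb
    linarith
  have h01 := hanti (Set.left_mem_Icc.mpr zero_le_one) (Set.right_mem_Icc.mpr zero_le_one)
    zero_le_one
  have hψ0 : ψ 0 = 0 := by
    simp [hψdef, Real.zero_rpow h1ν.ne']
  have hψ1 : ψ 1 = f (y + s) - f y - f' y ⬝ᵥ s - L / (1 + ν) * N s ^ (1 + ν) := by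
    simp [hψdef, Real.one_rpow]
  rw [hψ0, hψ1] at h01
  linarith


theorem holder_bregman_lower_bound {n : ℕ} {ν L : ℝ} (hν : 0 < ν) (hν1 : ν ≤ 1)
    (hL : 0 < L) (N : (Fin n → ℝ) → ℝ)
    (hN0 : ∀ x, N x = 0 ↔ x = 0) (hNs : ∀ (c : ℝ) x, N (c • x) = |c| * N x)
    (hNt : ∀ x y, N (x + y) ≤ N x + N y)
    (f : (Fin n → ℝ) → ℝ) (f' : (Fin n → ℝ) → (Fin n → ℝ))
    (hconv : ConvexOn ℝ Set.univ f)
    (hgrad : ∀ x, HasGradientAt (fun z : EuclideanSpace ℝ (Fin n) => f ((WithLp.equiv 2 (Fin n → ℝ)) z))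
      ((WithLp.equiv 2 (Fin n → ℝ)).symm (f' x)) ((WithLp.equiv 2 (Fin n → ℝ)).symm x))
    (hholder : ∀ x y,
      (⨆ u : {u : Fin n → ℝ // N u ≤ 1}, (f' x - f' y) ⬝ᵥ u.1) ≤ L * N (x - y) ^ ν) :
    ∀ x y,
      (⨆ u : {u : Fin n → ℝ // N u ≤ 1}, (f' x - f' y) ⬝ᵥ u.1) ^ (1 + 1 / ν)
        ≤ (1 + ν) / ν * L ^ (1 / ν) * (f y - f x - f' x ⬝ᵥ (y - x)) := by
  intro x y
  have hNnonneg := N_nonneg N hNs hNt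
  have h1ν : (0:ℝ) < 1 + ν := by linarith
  have hLν : (0:ℝ) < L ^ (1/ν) := Real.rpow_pos_of_pos hL _
  have hB : 0 ≤ f y - f x - f' x ⬝ᵥ (y - x) := by
    have := first_order f f' hconv hgrad x y
    linarith
  set D := ⨆ u : {u : Fin n → ℝ // N u ≤ 1}, (f' x - f' y) ⬝ᵥ u.1 with hD
  have hDnn : 0 ≤ D := dual_nonneg N hN0 hNs hNt _
  rcases hDnn.lt_or_eq with hDpos | hD0
  swap
  · rw [← hD0, Real.zero_rpow (by positivity)]
    have : (0:ℝ) ≤ (1 + ν) / ν := by positivity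
    exact mul_nonneg (mul_nonneg this hLν.le) hB
  -- pairing bound for descent
  have hpair : ∀ a b v, (f' a - f' b) ⬝ᵥ v ≤ L * N (a - b) ^ ν * N v := by
    intro a b v
    calc (f' a - f' b) ⬝ᵥ v
        ≤ (⨆ u : {u : Fin n → ℝ // N u ≤ 1}, (f' a - f' b) ⬝ᵥ u.1) * N v :=
          dual_pairing N hN0 hNs hNt _ v
      _ ≤ L * N (a - b) ^ ν * N v :=
          mul_le_mul_of_nonneg_right (hholder a b) (hNnonneg v)
  obtain ⟨u₀, hu₀, hu₀eq⟩ := dual_attained N hN0 hNs hNt (f' x - f' y)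
  set t := (D / L) ^ (1/ν) with ht
  have htpos : 0 < t := Real.rpow_pos_of_pos (div_pos hDpos hL) _
  -- descent applied at y with step t • u₀, then first-order at x
  have hdesc := descent hν hL N hN0 hNnonneg hNs f f' hgrad hpair y (t • u₀)
  have hfo := first_order f f' hconv hgrad x (y + t • u₀)
  have hlin1 : f' x ⬝ᵥ ((y + t • u₀) - x) = f' x ⬝ᵥ (y - x) + t * (f' x ⬝ᵥ u₀) := by
    have : (y + t • u₀) - x = (y - x) + t • u₀ := by abel
    rw [this, dotProduct_add, dotProduct_smul]
    simp [smul_eq_mul]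
  have hlin2 : f' y ⬝ᵥ (t • u₀) = t * (f' y ⬝ᵥ u₀) := by
    rw [dotProduct_smul]; simp [smul_eq_mul]
  have hNstep : N (t • u₀) ^ (1 + ν) ≤ t ^ (1 + ν) := by
    rw [hNs, abs_of_nonneg htpos.le]
    apply Real.rpow_le_rpow (mul_nonneg htpos.le (hNnonneg u₀)) _ h1ν.le
    nlinarith [hNnonneg u₀]
  have hdot : (f' x - f' y) ⬝ᵥ u₀ = D := hu₀eq
  have hsub : f' x ⬝ᵥ u₀ - f' y ⬝ᵥ u₀ = D := by
    rw [← sub_dotProduct]; exact hdot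
  have key : t * D - L / (1 + ν) * t ^ (1 + ν) ≤ f y - f x - f' x ⬝ᵥ (y - x) := by
    have h2 : L / (1 + ν) * N (t • u₀) ^ (1 + ν) ≤ L / (1 + ν) * t ^ (1 + ν) :=
      mul_le_mul_of_nonneg_left hNstep (by positivity)
    rw [hlin1] at hfo
    rw [hlin2] at hdesc
    nlinarith
  -- compute the value of the left side
  have hDL : (0:ℝ) < D / L := div_pos hDpos hL
  have htD : t * D = D ^ (1 + 1/ν) / L ^ (1/ν) := by
    rw [ht, Real.div_rpow hDnn hL.le]
    rw [add_comm (1:ℝ) (1/ν), Real.rpow_add hDpos, Real.rpow_one]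
    field_simp
  have htpow : L / (1 + ν) * t ^ (1 + ν) = t * D / (1 + ν) := by
    have hexp : (1/ν) * (1 + ν) = 1/ν + 1 := by field_simp
    have h6 : t ^ (1 + ν) = t * (D / L) := by
      rw [ht, ← Real.rpow_mul hDL.le, hexp, Real.rpow_add hDL, Real.rpow_one]
    rw [h6, ht]
    field_simp
  have hval : t * D - L / (1 + ν) * t ^ (1 + ν) = ν / (1 + ν) * (D ^ (1 + 1/ν) / L ^ (1/ν)) := by
    rw [htpow, htD]
    field_simp
    ring
  rw [hval] at key
  have hc : (0:ℝ) < (1 + ν)/ν * L ^ (1/ν) := by positivity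
  calc D ^ (1 + 1/ν)
      = (1 + ν)/ν * L ^ (1/ν) * (ν/(1 + ν) * (D ^ (1 + 1/ν)/L ^ (1/ν))) := by
        field_simp
    _ ≤ (1 + ν)/ν * L ^ (1/ν) * (f y - f x - f' x ⬝ᵥ (y - x)) :=
        mul_le_mul_of_nonneg_left key hc.le
end
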